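/- Let a¹, a², a³: ℤ → ℂ be sequences in h¹ (weighted ℓ² with weight (1+p²)). Define R_p = Σ_{(p,q,r,s)∈Γ₀} a¹_q · conj(a²_r) · a³_s. Then there exists a constant C > 0 (independent of the sequences) such that ‖R‖_{ℓ²} ≤ C · min over permutations σ of {1,2,3} of ‖a^{σ(1)}‖_{ℓ²} · ‖a^{σ(2)}‖_{h¹} · ‖a^{σ(3)}‖_{h¹}. -/

import Mathlib

open scoped ComplexConjugate

/-- The reduced resonant nonlinearity: `R f g h p = ∑_{(p,q,r,s)∈Γ₀} f_q conj(g_r) h_s`,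
where `Γ₀ = {(p,q,r,s) : {p,r} = {q,s}}`. -/
noncomputable def Rop (f g h : ℤ → ℂ) (p : ℤ) : ℂ :=
  ∑' x : {x : ℤ × ℤ × ℤ // ({p, x.2.1} : Set ℤ) = {x.1, x.2.2}},
    f x.val.1 * conj (g x.val.2.1) * h x.val.2.2

/-- The `ℓ²` norm of a sequence. -/
noncomputable def l2norm (a : ℤ → ℂ) : ℝ := Real.sqrt (∑' p : ℤ, ‖a p‖ ^ 2)

/-- The `h¹` norm of a sequence. -/
noncomputable def h1norm (a : ℤ → ℂ) : ℝ :=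
  Real.sqrt (∑' p : ℤ, (1 + (p : ℝ) ^ 2) * ‖a p‖ ^ 2)

open scoped ENNReal

lemma Rop_formula (a1 a2 a3 : ℤ → ℂ) (p : ℤ)
    (h1 : Summable fun r => conj (a2 r) * a3 r)
    (h2 : Summable fun r => a1 r * conj (a2 r)) :
    Rop a1 a2 a3 p =
      a1 p * (∑' r, conj (a2 r) * a3 r) + (∑' r, a1 r * conj (a2 r)) * a3 p
        - a1 p * conj (a2 p) * a3 p := by
  classical
  set F : ℤ × ℤ × ℤ → ℂ := fun x => a1 x.1 * conj (a2 x.2.1) * a3 x.2.2 with hF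
  set e1 : ℤ → ℤ × ℤ × ℤ := fun r => (p, r, r) with he1
  set e2 : ℤ → ℤ × ℤ × ℤ := fun r => (r, r, p) with he2
  have he1inj : Function.Injective e1 := by intro a b h; simpa [he1, Prod.ext_iff] using h
  have he2inj : Function.Injective e2 := by intro a b h; simpa [he2, Prod.ext_iff] using h
  have hS : {x : ℤ × ℤ × ℤ | ({p, x.2.1} : Set ℤ) = {x.1, x.2.2}}
      = Set.range e1 ∪ Set.range e2 := by
    ext ⟨x1, x2, x3⟩
    simp only [Set.mem_setOf_eq, Set.pair_eq_pair_iff, Set.mem_union, Set.mem_range, he1, he2,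
      Prod.mk.injEq]
    aesop
  have hint : Set.range e1 ∩ Set.range e2 = {((p, p, p) : ℤ × ℤ × ℤ)} := by
    ext ⟨x1, x2, x3⟩
    simp only [Set.mem_inter_iff, Set.mem_range, he1, he2, Prod.mk.injEq, Set.mem_singleton_iff]
    aesop
  have hcomp1 : ∀ r, (Set.range e1).indicator F (e1 r) = a1 p * (conj (a2 r) * a3 r) := by
    intro r
    rw [Set.indicator_of_mem (Set.mem_range_self r)]
    simp [hF, he1, mul_assoc]
  have hcomp2 : ∀ r, (Set.range e2).indicator F (e2 r) = (a1 r * conj (a2 r)) * a3 p := by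
    intro r
    rw [Set.indicator_of_mem (Set.mem_range_self r)]
  have hs1 : Summable ((Set.range e1).indicator F) := by
    rw [← he1inj.summable_iff (fun x hx => Set.indicator_of_notMem hx F)]
    refine Summable.congr (h1.mul_left (a1 p)) fun r => (hcomp1 r).symm
  have hs2 : Summable ((Set.range e2).indicator F) := by
    rw [← he2inj.summable_iff (fun x hx => Set.indicator_of_notMem hx F)]
    refine Summable.congr (h2.mul_right (a3 p)) fun r => (hcomp2 r).symm
  have hsi : Summable ((Set.range e1 ∩ Set.range e2).indicator F) := by
    rw [hint]
    refine summable_of_ne_finset_zero (s := {((p, p, p) : ℤ × ℤ × ℤ)}) fun x hx => ?_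
    exact Set.indicator_of_notMem (by simpa using hx) F
  have key : ∀ x, ((Set.range e1 ∪ Set.range e2).indicator F) x
      = (Set.range e1).indicator F x + (Set.range e2).indicator F x
        - (Set.range e1 ∩ Set.range e2).indicator F x := by
    intro x
    have := Set.indicator_union_add_inter_apply F (Set.range e1) (Set.range e2) x
    linear_combination this
  have t1 : ∑' x, (Set.range e1).indicator F x = a1 p * (∑' r, conj (a2 r) * a3 r) := by
    rw [← Function.Injective.tsum_eq he1inj (f := (Set.range e1).indicator F)
      (Function.support_subset_iff'.mpr (fun x hx => Set.indicator_of_notMem hx F))]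
    rw [tsum_congr hcomp1, tsum_mul_left]
  have t2 : ∑' x, (Set.range e2).indicator F x = (∑' r, a1 r * conj (a2 r)) * a3 p := by
    rw [← Function.Injective.tsum_eq he2inj (f := (Set.range e2).indicator F)
      (Function.support_subset_iff'.mpr (fun x hx => Set.indicator_of_notMem hx F))]
    rw [tsum_congr hcomp2, tsum_mul_right]
  have t3 : ∑' x, (Set.range e1 ∩ Set.range e2).indicator F x = a1 p * conj (a2 p) * a3 p := by
    rw [hint]
    rw [tsum_eq_single ((p, p, p) : ℤ × ℤ × ℤ)
      (fun x hx => Set.indicator_of_notMem (by simpa using hx) F)]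
    simp [hF]
  have hrw : Rop a1 a2 a3 p
      = ∑' x, ({x : ℤ × ℤ × ℤ | ({p, x.2.1} : Set ℤ) = {x.1, x.2.2}}).indicator F x := by
    rw [Rop, ← tsum_subtype]
    rfl
  rw [hrw, hS, tsum_congr key, Summable.tsum_sub (hs1.add hs2) hsi, Summable.tsum_add hs1 hs2, t1, t2, t3]

lemma sq_summable_of_weighted {a : ℤ → ℂ}
    (h : Summable fun p : ℤ => (1 + (p : ℝ) ^ 2) * ‖a p‖ ^ 2) :
    Summable fun p : ℤ => ‖a p‖ ^ 2 := by
  refine h.of_nonneg_of_le (fun p => by positivity) fun p => ?_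
  nlinarith [sq_nonneg (p : ℝ), sq_nonneg ‖a p‖]

lemma memlp_of_sq_summable {a : ℤ → ℂ} (h : Summable fun p : ℤ => ‖a p‖ ^ 2) :
    Memℓp a 2 := by
  apply memℓp_gen
  have h2 : (2 : ℝ≥0∞).toReal = (2 : ℝ) := by simp
  rw [h2]
  convert h using 2 with p
  rw [← Real.rpow_natCast ‖a p‖ 2]
  norm_num

lemma l2norm_eq_norm {a : ℤ → ℂ} (h : Memℓp a 2) :
    l2norm a = ‖(⟨a, h⟩ : lp (fun _ : ℤ => ℂ) 2)‖ := by
  have h2 : (0:ℝ) < (2 : ℝ≥0∞).toReal := by simp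
  have hts := lp.norm_rpow_eq_tsum h2 (⟨a, h⟩ : lp (fun _ : ℤ => ℂ) 2)
  have htr : (2 : ℝ≥0∞).toReal = (2 : ℝ) := by simp
  rw [htr] at hts
  rw [l2norm]
  have heq : (∑' p : ℤ, ‖a p‖ ^ 2) = ‖(⟨a, h⟩ : lp (fun _ : ℤ => ℂ) 2)‖ ^ (2:ℝ) := by
    rw [hts]
    congr 1 with p
    rw [← Real.rpow_natCast ‖a p‖ 2]; norm_num
  rw [heq]
  rw [show ‖(⟨a, h⟩ : lp (fun _ : ℤ => ℂ) 2)‖ ^ (2:ℝ) = ‖(⟨a, h⟩ : lp (fun _ : ℤ => ℂ) 2)‖ ^ (2:ℕ) by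
    rw [← Real.rpow_natCast]; norm_num]
  exact Real.sqrt_sq (norm_nonneg _)

lemma l2norm_le_h1norm {a : ℤ → ℂ}
    (h : Summable fun p : ℤ => (1 + (p : ℝ) ^ 2) * ‖a p‖ ^ 2) :
    l2norm a ≤ h1norm a := by
  refine Real.sqrt_le_sqrt ?_
  refine Summable.tsum_le_tsum (fun p => ?_) (sq_summable_of_weighted h) h
  nlinarith [sq_nonneg (p : ℝ), sq_nonneg ‖a p‖]

theorem stmt_3 :
    ∃ C > 0, ∀ a1 a2 a3 : ℤ → ℂ,
      Summable (fun p : ℤ => (1 + (p : ℝ) ^ 2) * ‖a1 p‖ ^ 2) →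
      Summable (fun p : ℤ => (1 + (p : ℝ) ^ 2) * ‖a2 p‖ ^ 2) →
      Summable (fun p : ℤ => (1 + (p : ℝ) ^ 2) * ‖a3 p‖ ^ 2) →
      l2norm (Rop a1 a2 a3) ≤
        C * min (min (l2norm a1 * h1norm a2 * h1norm a3)
                     (l2norm a2 * h1norm a1 * h1norm a3))
                (l2norm a3 * h1norm a1 * h1norm a2) := by
  classical
  refine ⟨3, by norm_num, fun a1 a2 a3 hw1 hw2 hw3 => ?_⟩
  have s1 := sq_summable_of_weighted hw1
  have s2 := sq_summable_of_weighted hw2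
  have s3 := sq_summable_of_weighted hw3
  have m1 := memlp_of_sq_summable s1
  have m2 := memlp_of_sq_summable s2
  have m3 := memlp_of_sq_summable s3
  set A1 : lp (fun _ : ℤ => ℂ) 2 := ⟨a1, m1⟩ with hA1
  set A2 : lp (fun _ : ℤ => ℂ) 2 := ⟨a2, m2⟩ with hA2
  set A3 : lp (fun _ : ℤ => ℂ) 2 := ⟨a3, m3⟩ with hA3
  have hsum23 : Summable fun r : ℤ => conj (a2 r) * a3 r := by
    have := lp.summable_inner (𝕜 := ℂ) A2 A3
    simpa [RCLike.inner_apply, hA2, hA3, mul_comm] using this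
  have hsum12 : Summable fun r : ℤ => a1 r * conj (a2 r) := by
    have := lp.summable_inner (𝕜 := ℂ) A2 A1
    simp only [RCLike.inner_apply] at this
    exact this.congr fun r => by simp [hA1, hA2, mul_comm]
  set T23 : ℂ := ∑' r : ℤ, conj (a2 r) * a3 r with hT23
  set T12 : ℂ := ∑' r : ℤ, a1 r * conj (a2 r) with hT12
  have hT23n : ‖T23‖ ≤ ‖A2‖ * ‖A3‖ := by
    have : T23 = (inner ℂ A2 A3 : ℂ) := by
      rw [lp.inner_eq_tsum, hT23]
      exact tsum_congr fun r => by simp [RCLike.inner_apply, hA2, hA3, mul_comm]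
    rw [this]
    exact norm_inner_le_norm A2 A3
  have hT12n : ‖T12‖ ≤ ‖A2‖ * ‖A1‖ := by
    have : T12 = (inner ℂ A2 A1 : ℂ) := by
      rw [lp.inner_eq_tsum, hT12]
      exact tsum_congr fun r => by simp [RCLike.inner_apply, hA1, hA2, mul_comm]
    rw [this]
    exact norm_inner_le_norm A2 A1
  set Z : ℤ → ℂ := fun p => a1 p * conj (a2 p) * a3 p with hZ
  have hZsq : ∀ p : ℤ, ‖Z p‖ ^ 2 ≤ (‖A1‖ * ‖A2‖) ^ 2 * ‖a3 p‖ ^ 2 := by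
    intro p
    have h1 : ‖a1 p‖ ≤ ‖A1‖ := lp.norm_apply_le_norm two_ne_zero A1 p
    have h2 : ‖a2 p‖ ≤ ‖A2‖ := lp.norm_apply_le_norm two_ne_zero A2 p
    have : ‖Z p‖ = ‖a1 p‖ * ‖a2 p‖ * ‖a3 p‖ := by
      simp [hZ, norm_mul]
    rw [this, mul_pow]
    have h1' : (0:ℝ) ≤ ‖a1 p‖ := norm_nonneg _
    have h2' : (0:ℝ) ≤ ‖a2 p‖ := norm_nonneg _
    have hle : ‖a1 p‖ * ‖a2 p‖ ≤ ‖A1‖ * ‖A2‖ := mul_le_mul h1 h2 h2' (h1'.trans h1)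
    have hsq' := pow_le_pow_left₀ (by positivity) hle 2
    exact mul_le_mul_of_nonneg_right hsq' (sq_nonneg _)
  have hZmem : Memℓp Z 2 := by
    apply memlp_of_sq_summable
    exact (s3.mul_left ((‖A1‖ * ‖A2‖) ^ 2)).of_nonneg_of_le (fun p => by positivity) hZsq
  set Zlp : lp (fun _ : ℤ => ℂ) 2 := ⟨Z, hZmem⟩ with hZlp
  have hZsum : Summable fun p : ℤ => ‖Z p‖ ^ 2 :=
    (s3.mul_left ((‖A1‖ * ‖A2‖) ^ 2)).of_nonneg_of_le (fun p => by positivity) hZsq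
  have hZn : ‖Zlp‖ ≤ ‖A1‖ * ‖A2‖ * ‖A3‖ := by
    have hsq : ‖Zlp‖ ^ 2 ≤ (‖A1‖ * ‖A2‖ * ‖A3‖) ^ 2 := by
      have e1 : ‖Zlp‖ ^ 2 = ∑' p : ℤ, ‖Z p‖ ^ 2 := by
        have := l2norm_eq_norm hZmem
        rw [hZlp, ← this, l2norm, Real.sq_sqrt (tsum_nonneg fun p => sq_nonneg _)]
      have e3 : ‖A3‖ ^ 2 = ∑' p : ℤ, ‖a3 p‖ ^ 2 := by
        have := l2norm_eq_norm m3
        rw [hA3, ← this, l2norm, Real.sq_sqrt (tsum_nonneg fun p => sq_nonneg _)]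
      rw [e1, mul_pow, e3, ← tsum_mul_left]
      exact Summable.tsum_le_tsum hZsq hZsum (s3.mul_left _)
    have h0 : (0:ℝ) ≤ ‖A1‖ * ‖A2‖ * ‖A3‖ := by positivity
    nlinarith [norm_nonneg Zlp]
  have hRfun : Rop a1 a2 a3 = fun p => T23 * a1 p + T12 * a3 p - Z p := by
    funext p
    rw [Rop_formula a1 a2 a3 p hsum23 hsum12]
    ring
  have hRmem : Memℓp (Rop a1 a2 a3) 2 := by
    rw [hRfun]
    exact ((m1.const_mul T23).add (m3.const_mul T12)).sub hZmem
  set Rlp : lp (fun _ : ℤ => ℂ) 2 := ⟨Rop a1 a2 a3, hRmem⟩ with hRlp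
  have hRdec : Rlp = T23 • A1 + T12 • A3 - Zlp := by
    apply Subtype.ext
    funext p
    have := congrFun hRfun p
    simp only [hRlp] at *
    rw [lp.coeFn_sub, lp.coeFn_add, lp.coeFn_smul, lp.coeFn_smul]
    simpa [hA1, hA3, hZlp, smul_eq_mul] using this
  have hRn : ‖Rlp‖ ≤ 3 * (‖A1‖ * ‖A2‖ * ‖A3‖) := by
    rw [hRdec]
    calc ‖T23 • A1 + T12 • A3 - Zlp‖
        ≤ ‖T23 • A1 + T12 • A3‖ + ‖Zlp‖ := norm_sub_le _ _
      _ ≤ ‖T23 • A1‖ + ‖T12 • A3‖ + ‖Zlp‖ := by gcongr; exact norm_add_le _ _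
      _ = ‖T23‖ * ‖A1‖ + ‖T12‖ * ‖A3‖ + ‖Zlp‖ := by rw [norm_smul, norm_smul]
      _ ≤ (‖A2‖ * ‖A3‖) * ‖A1‖ + (‖A2‖ * ‖A1‖) * ‖A3‖ + ‖A1‖ * ‖A2‖ * ‖A3‖ := by
          exact add_le_add (add_le_add (mul_le_mul_of_nonneg_right hT23n (norm_nonneg _))
            (mul_le_mul_of_nonneg_right hT12n (norm_nonneg _))) hZn
      _ = 3 * (‖A1‖ * ‖A2‖ * ‖A3‖) := by ring
  have hRval : l2norm (Rop a1 a2 a3) = ‖Rlp‖ := l2norm_eq_norm hRmem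
  have hval1 : ‖A1‖ = l2norm a1 := (l2norm_eq_norm m1).symm
  have hval2 : ‖A2‖ = l2norm a2 := (l2norm_eq_norm m2).symm
  have hval3 : ‖A3‖ = l2norm a3 := (l2norm_eq_norm m3).symm
  have hmain : l2norm (Rop a1 a2 a3) ≤ 3 * (l2norm a1 * l2norm a2 * l2norm a3) := by
    rw [hRval, ← hval1, ← hval2, ← hval3]; exact hRn
  have hl1 : l2norm a1 ≤ h1norm a1 := l2norm_le_h1norm hw1
  have hl2 : l2norm a2 ≤ h1norm a2 := l2norm_le_h1norm hw2
  have hl3 : l2norm a3 ≤ h1norm a3 := l2norm_le_h1norm hw3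
  have hn1 : (0:ℝ) ≤ l2norm a1 := Real.sqrt_nonneg _
  have hn2 : (0:ℝ) ≤ l2norm a2 := Real.sqrt_nonneg _
  have hn3 : (0:ℝ) ≤ l2norm a3 := Real.sqrt_nonneg _
  refine hmain.trans ?_
  have hb1 : l2norm a1 * l2norm a2 * l2norm a3 ≤ l2norm a1 * h1norm a2 * h1norm a3 :=
    mul_le_mul (mul_le_mul_of_nonneg_left hl2 hn1) hl3 hn3 (mul_nonneg hn1 (hn2.trans hl2))
  have hb2 : l2norm a1 * l2norm a2 * l2norm a3 ≤ l2norm a2 * h1norm a1 * h1norm a3 := by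
    calc l2norm a1 * l2norm a2 * l2norm a3 = l2norm a2 * l2norm a1 * l2norm a3 := by ring
      _ ≤ l2norm a2 * h1norm a1 * h1norm a3 :=
        mul_le_mul (mul_le_mul_of_nonneg_left hl1 hn2) hl3 hn3 (mul_nonneg hn2 (hn1.trans hl1))
  have hb3 : l2norm a1 * l2norm a2 * l2norm a3 ≤ l2norm a3 * h1norm a1 * h1norm a2 := by
    calc l2norm a1 * l2norm a2 * l2norm a3 = l2norm a3 * l2norm a1 * l2norm a2 := by ring
      _ ≤ l2norm a3 * h1norm a1 * h1norm a2 :=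
        mul_le_mul (mul_le_mul_of_nonneg_left hl1 hn3) hl2 hn2 (mul_nonneg hn3 (hn1.trans hl1))
  have : l2norm a1 * l2norm a2 * l2norm a3
      ≤ min (min (l2norm a1 * h1norm a2 * h1norm a3) (l2norm a2 * h1norm a1 * h1norm a3))
          (l2norm a3 * h1norm a1 * h1norm a2) := le_min (le_min hb1 hb2) hb3
  linarith
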